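/- Let p be a partial metric on a set X, x₀ ∈ X, f : X → X a function, r ∈ ℝ, and φ : [r,∞) → [0,∞) a non-decreasing function with φ(t) = 0 if and only if t = r. Suppose that for all natural numbers i and j: r ≤ p(f^i(x₀), f^i(x₀)) and p(f^{i+1}(x₀), f^{j+1}(x₀)) ≤ p(f^i(x₀), f^j(x₀)) − φ(p(f^i(x₀), f^j(x₀))) (i.e. f is an orbital φ_r-contraction at x₀). Then the orbit (f^i(x₀))_{i∈ℕ} is a Cauchy sequence in (X,p) with central distance r. -/

import Mathlib

/-- `p` is a partial metric on `X`. -/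
def IsPartialMetric {X : Type*} (p : X → X → ℝ) : Prop :=
  (∀ x y, p x x ≤ p x y) ∧
  (∀ x y, p x y = p y x) ∧
  (∀ x y, (p x x = p x y ∧ p x y = p y y) ↔ x = y) ∧
  (∀ x y z, p x y ≤ p x z + p z y - p z z)

/-- The sequence `x` is Cauchy in `(X,p)` with central distance `r`. -/
def IsCauchyWith {X : Type*} (p : X → X → ℝ) (x : ℕ → X) (r : ℝ) : Prop :=
  ∀ ε : ℝ, 0 < ε → ∃ N : ℕ, ∀ i j : ℕ, N < j → j ≤ i → |p (x i) (x j) - r| < ε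

/-- An orbital `φ_r`-contraction generates a Cauchy orbit with central distance `r`. -/
theorem orbital_phir_contraction_cauchy {X : Type*} (p : X → X → ℝ)
    (hp : IsPartialMetric p) (x₀ : X) (f : X → X) (r : ℝ) (φ : ℝ → ℝ)
    (hφ0 : ∀ t : ℝ, r ≤ t → 0 ≤ φ t)
    (hφmono : ∀ s t : ℝ, r ≤ s → s ≤ t → φ s ≤ φ t)
    (hφzero : ∀ t : ℝ, r ≤ t → (φ t = 0 ↔ t = r))
    (h1 : ∀ i : ℕ, r ≤ p (f^[i] x₀) (f^[i] x₀))
    (h2 : ∀ i j : ℕ, p (f^[i + 1] x₀) (f^[j + 1] x₀) ≤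
      p (f^[i] x₀) (f^[j] x₀) - φ (p (f^[i] x₀) (f^[j] x₀))) :
    IsCauchyWith p (fun i => f^[i] x₀) r := by
  obtain ⟨hlb, hsym, _hsep, htri⟩ := hp
  set x : ℕ → X := fun i => f^[i] x₀ with hx
  -- all pairwise distances are at least r
  have hd_r : ∀ i j : ℕ, r ≤ p (x i) (x j) := fun i j => (h1 i).trans (hlb _ _)
  -- positivity of φ above r
  have hφpos : ∀ t : ℝ, r < t → 0 < φ t := by
    intro t ht
    rcases lt_or_eq_of_le (hφ0 t ht.le) with h | h
    · exact h
    · exact absurd ((hφzero t ht.le).mp h.symm) (by linarith)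
  intro ε hε
  set δ := min (ε / 2) (φ (r + ε / 2)) with hδdef
  have hδpos : 0 < δ := lt_min (by linarith) (hφpos _ (by linarith))
  have hδε : δ ≤ ε / 2 := min_le_left _ _
  have hδφ : δ ≤ φ (r + ε / 2) := min_le_right _ _
  -- the sequence of adjacent distances
  set a : ℕ → ℝ := fun n => p (x (n + 1)) (x n) with ha
  have ha_r : ∀ n, r ≤ a n := fun n => hd_r _ _
  have ha_step : ∀ n, a (n + 1) ≤ a n - φ (a n) := fun n => h2 (n + 1) n
  -- Lemma A : adjacent distances drop below r + δ eventually
  have hA : ∃ N, ∀ n, N ≤ n → a n < r + δ := by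
    have hanti : ∀ n m, n ≤ m → a m ≤ a n := by
      intro n m h
      induction m with
      | zero => simp [Nat.le_zero.mp h]
      | succ m ih =>
        rcases Nat.lt_or_ge n (m + 1) with h' | h'
        · have := ih (by omega)
          have := ha_step m
          have := hφ0 _ (ha_r m)
          linarith
        · have : n = m + 1 := by omega
          simp [this]
    have hkey : ∃ N, a N < r + δ := by
      by_contra hcon
      push_neg at hcon
      have hc : 0 < φ (r + δ) := hφpos _ (by linarith)
      have hlin : ∀ n : ℕ, a n ≤ a 0 - n * φ (r + δ) := by
        intro n
        induction n with
        | zero => simp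
        | succ n ih =>
          have h1' := ha_step n
          have h2' : φ (r + δ) ≤ φ (a n) := hφmono _ _ (by linarith) (hcon n)
          push_cast
          push_cast at ih
          linarith
      obtain ⟨n, hn⟩ := exists_nat_gt ((a 0 - r) / φ (r + δ))
      have := hlin n
      have := ha_r n
      rw [div_lt_iff₀ hc] at hn
      linarith
    obtain ⟨N, hN⟩ := hkey
    exact ⟨N, fun n hn => lt_of_le_of_lt (hanti N n hn) hN⟩
  obtain ⟨N, hN⟩ := hA
  refine ⟨N, ?_⟩
  intro i j hNj hji
  -- upper bound by induction on the gap
  have hub : ∀ k : ℕ, p (x (j + k)) (x j) < r + ε := by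
    have haj : a j < r + δ := hN j hNj.le
    intro k
    induction k with
    | zero =>
      have h0 : p (x j) (x j) ≤ p (x j) (x (j + 1)) := hlb _ _
      have h0' : p (x j) (x (j + 1)) = a j := hsym _ _
      simpa using lt_of_le_of_lt (h0.trans_eq h0') (by linarith)
    | succ k ih =>
      -- triangle through x (j+1), then contraction
      have htr : p (x (j + (k + 1))) (x j) ≤
          p (x (j + (k + 1))) (x (j + 1)) + p (x (j + 1)) (x j) - p (x (j + 1)) (x (j + 1)) :=
        htri _ _ _
      have hcontr : p (x (j + (k + 1))) (x (j + 1)) ≤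
          p (x (j + k)) (x j) - φ (p (x (j + k)) (x j)) := by
        have := h2 (j + k) j
        simpa only [Nat.add_assoc] using this
      have hdiag : r ≤ p (x (j + 1)) (x (j + 1)) := h1 _
      have hstep : p (x (j + (k + 1))) (x j) ≤
          p (x (j + k)) (x j) - φ (p (x (j + k)) (x j)) + δ := by
        have : p (x (j + 1)) (x j) = a j := rfl
        linarith
      rcases lt_or_ge (p (x (j + k)) (x j)) (r + ε / 2) with hc | hc
      · have hφnn : 0 ≤ φ (p (x (j + k)) (x j)) := hφ0 _ (hd_r _ _)
        linarith
      · have hφge : φ (r + ε / 2) ≤ φ (p (x (j + k)) (x j)) :=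
          hφmono _ _ (by linarith) hc
        linarith
  obtain ⟨k, rfl⟩ := Nat.exists_eq_add_of_le hji
  have h1' := hub k
  have h2' := hd_r (j + k) j
  simp only [hx] at h1' h2' ⊢
  rw [abs_sub_lt_iff]
  constructor <;> linarith
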